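/- Let A = ⊕_{n≥0} A_n be a graded ring generated as an A₀-algebra by A₁, and let I ⊆ A be a homogeneous ideal generated by homogeneous elements of degree at most d. Then for every m ≥ 1 and every integer b ≥ dm one has (I^m)_{b+1} = A₁ · (I^m)_b, where (I^m)_b denotes the degree-b homogeneous component of I^m. -/

import Mathlib

open Pointwise
/-- If `A = ⊕ₙ Aₙ` is a graded ring generated as an `A₀`-algebra by `A₁` and `I` is an
ideal generated by homogeneous elements of degree at most `d`, then for every `m ≥ 1` and
every `b ≥ dm` one has `(Iᵐ)_{b+1} = A₁ · (Iᵐ)_b`. -/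
theorem stmt3 {A : Type*} [CommRing A]
    (𝒜 : ℕ → AddSubgroup A) [GradedRing 𝒜]
    (hstd : ∀ n : ℕ, 𝒜 (n + 1) =
      AddSubgroup.closure (Set.image2 (· * ·) (𝒜 1 : Set A) (𝒜 n : Set A)))
    (I : Ideal A) (d : ℕ) (T : Set A)
    (hspan : I = Ideal.span T)
    (hT : ∀ f ∈ T, ∃ i ≤ d, f ∈ 𝒜 i)
    (m : ℕ) (hm : 1 ≤ m) (b : ℕ) (hb : d * m ≤ b) :
    (I ^ m).toAddSubgroup ⊓ 𝒜 (b + 1) =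
      AddSubgroup.closure
        (Set.image2 (· * ·) (𝒜 1 : Set A)
          (((I ^ m).toAddSubgroup ⊓ 𝒜 b : AddSubgroup A) : Set A)) := by
  set S := AddSubgroup.closure
      (Set.image2 (· * ·) (𝒜 1 : Set A)
        (((I ^ m).toAddSubgroup ⊓ 𝒜 b : AddSubgroup A) : Set A)) with hSdef
  -- key lemma: homogeneous piece of positive degree times suitable element lands in S
  have key : ∀ (k e : ℕ) (g f : A), g ∈ 𝒜 (k + 1) → f ∈ I ^ m → f ∈ 𝒜 e →
      k + e = b → g * f ∈ S := by
    intro k e g f hg hfI hfe hke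
    rw [hstd k] at hg
    induction hg using AddSubgroup.closure_induction with
    | mem x hx =>
        obtain ⟨u, hu, v, hv, rfl⟩ := hx
        rw [mul_assoc]
        refine AddSubgroup.subset_closure ⟨u, hu, v * f, ?_, rfl⟩
        refine AddSubgroup.mem_inf.mpr ⟨?_, ?_⟩
        · exact (Submodule.mem_toAddSubgroup _).mpr (Ideal.mul_mem_left _ v hfI)
        · have := SetLike.mul_mem_graded hv hfe
          rwa [hke] at this
    | zero => simpa using (zero_mem S)
    | add x y hx hy px py => rw [add_mul]; exact add_mem px py
    | neg x hx px => rw [neg_mul]; exact neg_mem px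
  -- products of n generators lie in I^n and are homogeneous of degree ≤ d*n
  have Tpow : ∀ n : ℕ, ∀ f ∈ (T ^ n : Set A), f ∈ I ^ n ∧ ∃ e ≤ d * n, f ∈ 𝒜 e := by
    intro n
    induction n with
    | zero =>
        intro f hf
        rw [pow_zero, Set.mem_one] at hf
        subst hf
        refine ⟨by rw [pow_zero, Ideal.one_eq_top]; trivial, 0, le_refl 0, ?_⟩
        exact SetLike.one_mem_graded 𝒜
    | succ n ih =>
        intro f hf
        rw [pow_succ, Set.mem_mul] at hf
        obtain ⟨g, hg, t, ht, rfl⟩ := hf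
        obtain ⟨hgI, e, he, hge⟩ := ih g hg
        obtain ⟨i, hid, hti⟩ := hT t ht
        refine ⟨?_, e + i, ?_, SetLike.mul_mem_graded hge hti⟩
        · rw [pow_succ]
          exact Ideal.mul_mem_mul hgI (hspan ▸ Ideal.subset_span ht)
        · calc e + i ≤ d * n + d := add_le_add he hid
            _ = d * (n + 1) := by ring
  apply le_antisymm
  · intro x hx
    obtain ⟨hxI, hxdeg⟩ := AddSubgroup.mem_inf.mp hx
    rw [Submodule.mem_toAddSubgroup, hspan, Ideal.span, Submodule.span_pow] at hxI
    obtain ⟨N, c, gf, hsum⟩ := Submodule.mem_span_set'.mp hxI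
    have hx' : x = GradedRing.proj 𝒜 (b + 1) x := by
      rw [GradedRing.proj_apply, DirectSum.decompose_of_mem_same 𝒜 hxdeg]
    rw [hx', ← hsum, map_sum]
    apply AddSubgroup.sum_mem
    intro i _
    obtain ⟨hfI, e, he, hfe⟩ := Tpow m (gf i : A) (gf i).2
    have heb : e ≤ b := le_trans he hb
    rw [GradedRing.proj_apply, smul_eq_mul,
      DirectSum.coe_decompose_mul_of_right_mem_of_le 𝒜 hfe (by omega : e ≤ b + 1)]
    have hidx : b + 1 - e = (b - e) + 1 := by omega
    rw [hidx]
    exact key (b - e) e _ _ (SetLike.coe_mem _) hfI hfe (by omega)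
  · rw [AddSubgroup.closure_le]
    rintro _ ⟨u, hu, v, hv, rfl⟩
    obtain ⟨hvI, hvb⟩ := AddSubgroup.mem_inf.mp hv
    refine AddSubgroup.mem_inf.mpr ⟨?_, ?_⟩
    · exact (Submodule.mem_toAddSubgroup _).mpr
        (Ideal.mul_mem_left _ u ((Submodule.mem_toAddSubgroup _).mp hvI))
    · have := SetLike.mul_mem_graded hu hvb
      rwa [add_comm] at this
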